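/- arXiv:2509.10473 — 4 statements merged into one kernel-verified Lean document; each statement's English description precedes it below -/
import Mathlib

section
/- Let G and H be connected bipartite graphs with bipartitions V(G) = A_G ∪ B_G, V(H) = A_H ∪ B_H, where |A_G| ≤ |B_G| and |A_H| ≤ |B_H|, with no isolated vertices. If (1 + |B_G|/|A_G|)·(1 + |B_H|/|A_H|) ≥ Δ(G) + Δ(H) + 1, then γ(G □ H) ≥ γ(G)·γ(H). -/
def IsDominatingSet {V : Type*} (G : SimpleGraph V) (D : Set V) : Prop :=
  ∀ v, v ∈ D ∨ ∃ u ∈ D, G.Adj u v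

noncomputable def domNum {V : Type*} (G : SimpleGraph V) [Fintype V] : ℕ :=
  sInf {n | ∃ D : Finset V, IsDominatingSet G ↑D ∧ D.card = n}

noncomputable def maxDeg {V : Type*} (G : SimpleGraph V) [Fintype V] : ℕ :=
  Finset.univ.sup fun v => (G.neighborSet v).ncard

def IsBipartition {V : Type*} (G : SimpleGraph V) (A B : Finset V) : Prop :=
  Disjoint A B ∧ (∀ v, v ∈ A ∨ v ∈ B) ∧
    ∀ u v, G.Adj u v → (u ∈ A ∧ v ∈ B) ∨ (u ∈ B ∧ v ∈ A)

lemma domNum_exists {V : Type*} [Fintype V] (G : SimpleGraph V) :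
    ∃ D : Finset V, IsDominatingSet G ↑D ∧ D.card = domNum G := by
  have hne : {n | ∃ D : Finset V, IsDominatingSet G ↑D ∧ D.card = n}.Nonempty :=
    ⟨_, Finset.univ, fun v => Or.inl (by simp), rfl⟩
  exact Nat.sInf_mem hne

lemma domNum_le_card {V : Type*} [Fintype V] {G : SimpleGraph V} {D : Finset V}
    (hD : IsDominatingSet G ↑D) : domNum G ≤ D.card :=
  Nat.sInf_le ⟨D, hD, rfl⟩

lemma ncard_neighborSet_eq_degree {V : Type*} [Fintype V] (G : SimpleGraph V)
    [DecidableRel G.Adj] (v : V) : (G.neighborSet v).ncard = G.degree v := by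
  rw [Set.ncard_eq_toFinset_card']
  simp [SimpleGraph.degree, SimpleGraph.neighborFinset]

lemma degree_le_maxDeg {V : Type*} [Fintype V] (G : SimpleGraph V)
    [DecidableRel G.Adj] (v : V) : G.degree v ≤ maxDeg G := by
  rw [← ncard_neighborSet_eq_degree]
  exact Finset.le_sup (f := fun v => (G.neighborSet v).ncard) (Finset.mem_univ v)

lemma card_le_domNum_mul {V : Type*} [Fintype V] (G : SimpleGraph V)
    [DecidableRel G.Adj] : Fintype.card V ≤ domNum G * (maxDeg G + 1) := by
  classical
  obtain ⟨D, hD, hcard⟩ := domNum_exists G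
  have hsub : (Finset.univ : Finset V) ⊆
      D.biUnion fun u => insert u (G.neighborFinset u) := by
    intro v _
    rcases hD v with h | ⟨u, hu, hadj⟩
    · exact Finset.mem_biUnion.2 ⟨v, by simpa using h, Finset.mem_insert_self _ _⟩
    · exact Finset.mem_biUnion.2 ⟨u, by simpa using hu,
        Finset.mem_insert_of_mem ((SimpleGraph.mem_neighborFinset _ _ _).2 hadj)⟩
  calc Fintype.card V = (Finset.univ : Finset V).card := (Finset.card_univ).symm
    _ ≤ (D.biUnion fun u => insert u (G.neighborFinset u)).card := Finset.card_le_card hsub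
    _ ≤ ∑ u ∈ D, (insert u (G.neighborFinset u)).card := Finset.card_biUnion_le
    _ ≤ ∑ u ∈ D, (maxDeg G + 1) := by
        refine Finset.sum_le_sum fun u _ => ?_
        calc (insert u (G.neighborFinset u)).card ≤ (G.neighborFinset u).card + 1 :=
              Finset.card_insert_le _ _
          _ ≤ maxDeg G + 1 := by
              exact Nat.add_le_add_right (degree_le_maxDeg G u) 1
    _ = D.card * (maxDeg G + 1) := by rw [Finset.sum_const, smul_eq_mul]
    _ = domNum G * (maxDeg G + 1) := by rw [hcard]

lemma maxDeg_box_le {V W : Type*} [Fintype V] [Fintype W]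
    (G : SimpleGraph V) (H : SimpleGraph W) :
    maxDeg (G □ H) ≤ maxDeg G + maxDeg H := by
  classical
  refine Finset.sup_le fun x _ => ?_
  rw [ncard_neighborSet_eq_degree, SimpleGraph.degree_boxProd]
  exact Nat.add_le_add (degree_le_maxDeg G x.1) (degree_le_maxDeg H x.2)

theorem stmt4 {V W : Type*} [Fintype V] [Fintype W]
    (G : SimpleGraph V) (H : SimpleGraph W)
    (AG BG : Finset V) (AH BH : Finset W)
    (hGconn : G.Connected) (hHconn : H.Connected)
    (hGbip : IsBipartition G AG BG) (hHbip : IsBipartition H AH BH)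
    (hGle : AG.card ≤ BG.card) (hHle : AH.card ≤ BH.card)
    (hGiso : ∀ v : V, ∃ u, G.Adj v u) (hHiso : ∀ v : W, ∃ u, H.Adj v u)
    (hcond : ((1 : ℚ) + (BG.card : ℚ) / AG.card) * (1 + (BH.card : ℚ) / AH.card) ≥
      (maxDeg G : ℚ) + maxDeg H + 1) :
    domNum (G □ H) ≥ domNum G * domNum H := by
  classical
  -- AG, AH nonempty
  have hAG : AG.Nonempty := by
    obtain ⟨v⟩ := hGconn.nonempty
    obtain ⟨u, hadj⟩ := hGiso v
    rcases hGbip.2.2 v u hadj with ⟨h, -⟩ | ⟨-, h⟩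
    exacts [⟨v, h⟩, ⟨u, h⟩]
  have hAH : AH.Nonempty := by
    obtain ⟨v⟩ := hHconn.nonempty
    obtain ⟨u, hadj⟩ := hHiso v
    rcases hHbip.2.2 v u hadj with ⟨h, -⟩ | ⟨-, h⟩
    exacts [⟨v, h⟩, ⟨u, h⟩]
  have ha : (0 : ℚ) < AG.card := by exact_mod_cast hAG.card_pos
  have hc : (0 : ℚ) < AH.card := by exact_mod_cast hAH.card_pos
  -- A-sides dominate
  have hdomG : domNum G ≤ AG.card := by
    refine domNum_le_card fun v => ?_
    rcases hGbip.2.1 v with h | h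
    · exact Or.inl (by simpa using h)
    · obtain ⟨u, hadj⟩ := hGiso v
      rcases hGbip.2.2 v u hadj with ⟨hv, -⟩ | ⟨-, hu⟩
      · exact absurd hv (Finset.disjoint_right.1 hGbip.1 h)
      · exact Or.inr ⟨u, by simpa using hu, hadj.symm⟩
  have hdomH : domNum H ≤ AH.card := by
    refine domNum_le_card fun v => ?_
    rcases hHbip.2.1 v with h | h
    · exact Or.inl (by simpa using h)
    · obtain ⟨u, hadj⟩ := hHiso v
      rcases hHbip.2.2 v u hadj with ⟨hv, -⟩ | ⟨-, hu⟩
      · exact absurd hv (Finset.disjoint_right.1 hHbip.1 h)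
      · exact Or.inr ⟨u, by simpa using hu, hadj.symm⟩
  -- cardinalities
  have hVcard : Fintype.card V = AG.card + BG.card := by
    have huniv : AG ∪ BG = Finset.univ :=
      Finset.eq_univ_iff_forall.2 fun v => Finset.mem_union.2 (hGbip.2.1 v)
    rw [← Finset.card_univ, ← huniv, Finset.card_union_of_disjoint hGbip.1]
  have hWcard : Fintype.card W = AH.card + BH.card := by
    have huniv : AH ∪ BH = Finset.univ :=
      Finset.eq_univ_iff_forall.2 fun v => Finset.mem_union.2 (hHbip.2.1 v)
    rw [← Finset.card_univ, ← huniv, Finset.card_union_of_disjoint hHbip.1]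
  -- key inequality over ℚ
  set S : ℕ := maxDeg G + maxDeg H + 1 with hS
  have key : (S : ℚ) * (AG.card * AH.card) ≤
      (AG.card + BG.card) * (AH.card + BH.card) := by
    have h1 : ((1 : ℚ) + (BG.card : ℚ) / AG.card) = (AG.card + BG.card) / AG.card := by
      field_simp
    have h2 : ((1 : ℚ) + (BH.card : ℚ) / AH.card) = (AH.card + BH.card) / AH.card := by
      field_simp
    rw [h1, h2, div_mul_div_comm, ge_iff_le, le_div_iff₀ (by positivity)] at hcond
    calc (S : ℚ) * (AG.card * AH.card)
        = ((maxDeg G : ℚ) + maxDeg H + 1) * (AG.card * AH.card) := by push_cast [hS]; ring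
      _ ≤ (AG.card + BG.card) * (AH.card + BH.card) := hcond
  have keyN : S * (AG.card * AH.card) ≤ (AG.card + BG.card) * (AH.card + BH.card) := by
    exact_mod_cast key
  -- chain in ℕ
  have h3 : S * (domNum G * domNum H) ≤ S * (AG.card * AH.card) :=
    Nat.mul_le_mul_left S (Nat.mul_le_mul hdomG hdomH)
  have h4 : Fintype.card (V × W) ≤ domNum (G □ H) * (maxDeg (G □ H) + 1) :=
    card_le_domNum_mul (G □ H)
  have h5 : domNum (G □ H) * (maxDeg (G □ H) + 1) ≤ domNum (G □ H) * S :=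
    Nat.mul_le_mul_left _ (Nat.add_le_add_right (maxDeg_box_le G H) 1)
  have h6 : S * (domNum G * domNum H) ≤ S * domNum (G □ H) := by
    calc S * (domNum G * domNum H) ≤ S * (AG.card * AH.card) := h3
      _ ≤ (AG.card + BG.card) * (AH.card + BH.card) := keyN
      _ = Fintype.card (V × W) := by rw [Fintype.card_prod, hVcard, hWcard]
      _ ≤ domNum (G □ H) * (maxDeg (G □ H) + 1) := h4
      _ ≤ domNum (G □ H) * S := h5
      _ = S * domNum (G □ H) := Nat.mul_comm _ _
  exact Nat.le_of_mul_le_mul_left h6 (by omega)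
end

section
/- Let G and H be k-regular bipartite graphs with balanced parts of sizes n_G and n_H respectively, with k ≥ 1, n_G ≥ k, n_H ≥ k. Suppose γ(G) ≤ 2⌈n_G/k⌉ and γ(H) ≤ 2⌈n_H/k⌉. If 1/(2k+1) ≥ (1/k + 1/n_G)·(1/k + 1/n_H), then γ(G □ H) ≥ γ(G)·γ(H). -/
/-- Every vertex has degree exactly `k`. -/
def IsRegularOfDeg {V : Type*} (G : SimpleGraph V) (k : ℕ) : Prop :=
  ∀ v, (G.neighborSet v).ncard = k

/-- There exists a dominating set of minimum size. -/
lemma exists_min_dom {V : Type*} (G : SimpleGraph V) [Fintype V] :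
    ∃ D : Finset V, IsDominatingSet G ↑D ∧ D.card = domNum G := by
  have hne : {n | ∃ D : Finset V, IsDominatingSet G ↑D ∧ D.card = n}.Nonempty :=
    ⟨(Finset.univ : Finset V).card, Finset.univ, fun v => Or.inl (by simp), rfl⟩
  exact Nat.sInf_mem hne

/-- Counting bound: if every vertex has degree ≤ d then any dominating finset D
satisfies |V| ≤ |D| * (d+1). -/
lemma dom_count {V : Type*} [Fintype V] (G : SimpleGraph V) (d : ℕ)
    (hdeg : ∀ v, (G.neighborSet v).ncard ≤ d)
    (D : Finset V) (hD : IsDominatingSet G ↑D) :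
    Fintype.card V ≤ D.card * (d + 1) := by
  classical
  have hsub : (Finset.univ : Finset V) ⊆
      D.biUnion (fun u => insert u (G.neighborSet u).toFinset) := by
    intro v _
    rcases hD v with hv | ⟨u, hu, huv⟩
    · exact Finset.mem_biUnion.2 ⟨v, hv, Finset.mem_insert_self _ _⟩
    · exact Finset.mem_biUnion.2 ⟨u, hu, Finset.mem_insert.2 (Or.inr (by simpa using huv))⟩
  calc Fintype.card V = (Finset.univ : Finset V).card := (Finset.card_univ).symm
    _ ≤ (D.biUnion (fun u => insert u (G.neighborSet u).toFinset)).card :=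
        Finset.card_le_card hsub
    _ ≤ ∑ u ∈ D, (insert u (G.neighborSet u).toFinset).card := Finset.card_biUnion_le
    _ ≤ ∑ u ∈ D, (d + 1) := by
        refine Finset.sum_le_sum fun u _ => ?_
        calc (insert u (G.neighborSet u).toFinset).card
            ≤ (G.neighborSet u).toFinset.card + 1 := Finset.card_insert_le _ _
          _ ≤ d + 1 := by
              have := hdeg u
              rw [Set.ncard_eq_toFinset_card'] at this
              omega
    _ = D.card * (d + 1) := by rw [Finset.sum_const, smul_eq_mul]

theorem stmt7 {V W : Type*} [Fintype V] [Fintype W]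
    (G : SimpleGraph V) (H : SimpleGraph W) (k nG nH : ℕ)
    (AG BG : Finset V) (AH BH : Finset W)
    (hGbip : IsBipartition G AG BG) (hHbip : IsBipartition H AH BH)
    (hGreg : IsRegularOfDeg G k) (hHreg : IsRegularOfDeg H k)
    (hAG : AG.card = nG) (hBG : BG.card = nG)
    (hAH : AH.card = nH) (hBH : BH.card = nH)
    (hk : 1 ≤ k) (hnG : k ≤ nG) (hnH : k ≤ nH)
    (hγG : domNum G ≤ 2 * Nat.ceil ((nG : ℚ) / k))
    (hγH : domNum H ≤ 2 * Nat.ceil ((nH : ℚ) / k))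
    (hcond : (1 : ℚ) / (2 * k + 1) ≥
      ((1 : ℚ) / k + 1 / nG) * ((1 : ℚ) / k + 1 / nH)) :
    domNum (G □ H) ≥ domNum G * domNum H := by
  classical
  -- cardinalities
  have hcardV : Fintype.card V = 2 * nG := by
    have : (Finset.univ : Finset V) = AG ∪ BG := by
      ext v; simp [hGbip.2.1 v]
    rw [← Finset.card_univ, this, Finset.card_union_of_disjoint hGbip.1, hAG, hBG]; ring
  have hcardW : Fintype.card W = 2 * nH := by
    have : (Finset.univ : Finset W) = AH ∪ BH := by
      ext v; simp [hHbip.2.1 v]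
    rw [← Finset.card_univ, this, Finset.card_union_of_disjoint hHbip.1, hAH, hBH]; ring
  -- degree bound in product
  have hdeg : ∀ x : V × W, ((G □ H).neighborSet x).ncard ≤ 2 * k := by
    intro x
    have h1 : ((G □ H).neighborSet x).ncard = (G □ H).degree x := by
      rw [Set.ncard_eq_toFinset_card', SimpleGraph.degree]
      congr 1
    rw [h1, SimpleGraph.degree_boxProd]
    have hg : G.degree x.1 = k := by
      rw [← hGreg x.1, SimpleGraph.degree, Set.ncard_eq_toFinset_card']; congr 1
    have hh : H.degree x.2 = k := by
      rw [← hHreg x.2, SimpleGraph.degree, Set.ncard_eq_toFinset_card']; congr 1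
    omega
  obtain ⟨D, hDdom, hDcard⟩ := exists_min_dom (G □ H)
  have hcount : 4 * nG * nH ≤ domNum (G □ H) * (2 * k + 1) := by
    have := dom_count (G □ H) (2 * k) hdeg D hDdom
    rw [hDcard] at this
    rw [Fintype.card_prod, hcardV, hcardW] at this
    calc 4 * nG * nH = 2 * nG * (2 * nH) := by ring
      _ ≤ _ := this
  -- positivity
  have hk0 : (0:ℚ) < k := by exact_mod_cast hk
  have hnG0 : (0:ℚ) < nG := by exact_mod_cast lt_of_lt_of_le hk hnG
  have hnH0 : (0:ℚ) < nH := by exact_mod_cast lt_of_lt_of_le hk hnH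
  -- ceil bounds
  have hceilG : (Nat.ceil ((nG : ℚ) / k) : ℚ) ≤ (nG : ℚ) / k + 1 :=
    le_of_lt (Nat.ceil_lt_add_one (by positivity))
  have hceilH : (Nat.ceil ((nH : ℚ) / k) : ℚ) ≤ (nH : ℚ) / k + 1 :=
    le_of_lt (Nat.ceil_lt_add_one (by positivity))
  -- translate to ℚ
  have haq : (domNum G : ℚ) ≤ 2 * ((nG : ℚ) / k + 1) := by
    calc (domNum G : ℚ) ≤ (2 * Nat.ceil ((nG : ℚ) / k) : ℕ) := by exact_mod_cast hγG
      _ = 2 * (Nat.ceil ((nG : ℚ) / k) : ℚ) := by push_cast; ring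
      _ ≤ 2 * ((nG : ℚ) / k + 1) := by linarith
  have hbq : (domNum H : ℚ) ≤ 2 * ((nH : ℚ) / k + 1) := by
    calc (domNum H : ℚ) ≤ (2 * Nat.ceil ((nH : ℚ) / k) : ℕ) := by exact_mod_cast hγH
      _ = 2 * (Nat.ceil ((nH : ℚ) / k) : ℚ) := by push_cast; ring
      _ ≤ 2 * ((nH : ℚ) / k + 1) := by linarith
  have hcq : 4 * (nG : ℚ) * nH ≤ (domNum (G □ H) : ℚ) * (2 * k + 1) := by
    exact_mod_cast hcount
  -- key rewriting: nG/k + 1 = nG * (1/k + 1/nG)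
  have hidG : (nG : ℚ) / k + 1 = nG * (1 / k + 1 / nG) := by
    field_simp
  have hidH : (nH : ℚ) / k + 1 = nH * (1 / k + 1 / nH) := by
    field_simp
  have ha0 : (0:ℚ) ≤ (domNum G : ℚ) := Nat.cast_nonneg _
  have h2k1 : (0:ℚ) < 2 * k + 1 := by positivity
  have key : (domNum G : ℚ) * domNum H ≤ domNum (G □ H) := by
    have step1 : (domNum G : ℚ) * domNum H ≤
        (2 * ((nG : ℚ) / k + 1)) * (2 * ((nH : ℚ) / k + 1)) := by
      apply mul_le_mul haq hbq (Nat.cast_nonneg _)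
      positivity
    have step2 : (2 * ((nG : ℚ) / k + 1)) * (2 * ((nH : ℚ) / k + 1)) =
        4 * nG * nH * ((1 / k + 1 / nG) * (1 / k + 1 / nH)) := by
      rw [hidG, hidH]; ring
    have step3 : 4 * (nG:ℚ) * nH * ((1 / k + 1 / nG) * (1 / k + 1 / nH)) ≤
        4 * nG * nH * (1 / (2 * k + 1)) := by
      apply mul_le_mul_of_nonneg_left hcond (by positivity)
    have step4 : 4 * (nG:ℚ) * nH * (1 / (2 * k + 1)) ≤ domNum (G □ H) := by
      rw [mul_one_div, div_le_iff₀ h2k1]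
      linarith [hcq]
    linarith [step1, step2.le, step3, step4, step2.ge]
  exact_mod_cast key
end

section
/- Let G be a k-regular bipartite graph with parts A, B, |A| = |B| = n = k + 2. Suppose there exists a ∈ A whose non-neighbors in B are b₁, b₂, and the open neighborhoods satisfy N(b₁) ≠ N(b₂). Then γ(G) ≤ 3. -/
theorem stmt13 {V : Type*} [Fintype V] (G : SimpleGraph V) (A B : Finset V) (k n : ℕ)
    (hbip : IsBipartition G A B) (hreg : IsRegularOfDeg G k)
    (hA : A.card = n) (hB : B.card = n) (hn : n = k + 2)
    (a : V) (b₁ b₂ : V) (ha : a ∈ A) (hb₁ : b₁ ∈ B) (hb₂ : b₂ ∈ B)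
    (hne : b₁ ≠ b₂) (hnadj₁ : ¬ G.Adj a b₁) (hnadj₂ : ¬ G.Adj a b₂)
    (hnonnbrs : ∀ b ∈ B, ¬ G.Adj a b → b = b₁ ∨ b = b₂)
    (hN : G.neighborSet b₁ ≠ G.neighborSet b₂) :
    domNum G ≤ 3 := by
  classical
  obtain ⟨hdisj, hcov, hadj⟩ := hbip
  have hnB : ∀ b ∈ B, ∀ v, G.Adj b v → v ∈ A := by
    intro b hb v h
    rcases hadj b v h with ⟨h1, _⟩ | ⟨_, h2⟩
    · exact absurd hb (Finset.disjoint_left.mp hdisj h1)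
    · exact h2
  have haB : a ∉ B := Finset.disjoint_left.mp hdisj ha
  have hab1 : a ≠ b₁ := fun h => haB (h ▸ hb₁)
  have hab2 : a ≠ b₂ := fun h => haB (h ▸ hb₂)
  have key : ∀ v ∈ A, v ≠ a → G.Adj b₁ v ∨ G.Adj b₂ v := by
    intro v hv hva
    by_contra hcon
    push_neg at hcon
    obtain ⟨h1, h2⟩ := hcon
    apply hN
    have hcard : ((A.erase a).erase v : Finset V).card = k := by
      rw [Finset.card_erase_of_mem (Finset.mem_erase.mpr ⟨hva, hv⟩),
        Finset.card_erase_of_mem ha, hA, hn]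
      omega
    have hsub : ∀ b ∈ B, ¬G.Adj b a → ¬G.Adj b v →
        G.neighborSet b = ↑((A.erase a).erase v) := by
      intro b hb hba hbv
      apply Set.eq_of_subset_of_ncard_le
      · intro u hu
        have hu' : G.Adj b u := hu
        simp only [Finset.coe_erase, Set.mem_diff, Finset.mem_coe,
          Set.mem_singleton_iff]
        exact ⟨⟨hnB b hb u hu', fun h => hba (h ▸ hu')⟩, fun h => hbv (h ▸ hu')⟩
      · rw [Set.ncard_coe_finset, hcard, hreg b]
      · exact Set.toFinite _
    rw [hsub b₁ hb₁ (fun h => hnadj₁ h.symm) h1,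
      hsub b₂ hb₂ (fun h => hnadj₂ h.symm) h2]
  have hdom : IsDominatingSet G ↑({a, b₁, b₂} : Finset V) := by
    intro w
    rcases hcov w with hw | hw
    · by_cases hwa : w = a
      · left; simp [hwa]
      · rcases key w hw hwa with h | h
        · right; exact ⟨b₁, by simp, h⟩
        · right; exact ⟨b₂, by simp, h⟩
    · by_cases hwa : G.Adj a w
      · right; exact ⟨a, by simp, hwa⟩
      · left
        rcases hnonnbrs w hw hwa with h | h <;> simp [h]
  have hcard3 : ({a, b₁, b₂} : Finset V).card = 3 :=
    Finset.card_eq_three.mpr ⟨a, b₁, b₂, hab1, hab2, hne, rfl⟩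
  exact Nat.sInf_le ⟨{a, b₁, b₂}, hdom, hcard3⟩
end

section
/- Let G be a k-regular bipartite graph with parts A, B, |A| = |B| = n = k + 2 ≥ 4, and suppose that for every a ∈ A with non-neighbors {b₁, b₂} ⊆ B we have N(b₁) = N(b₂). Then every vertex b ∈ B has exactly one other vertex b' ∈ B with N(b) = N(b'), and the non-edges of G form a disjoint union of n/2 complete bipartite graphs K_{2,2}; in particular n is even. -/
theorem stmt14 {V : Type*} [Fintype V] (G : SimpleGraph V) (A B : Finset V) (k n : ℕ)
    (hbip : IsBipartition G A B) (hreg : IsRegularOfDeg G k)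
    (hA : A.card = n) (hB : B.card = n) (hn : n = k + 2) (hn4 : 4 ≤ n)
    (hyp : ∀ a ∈ A, ∀ b₁ ∈ B, ∀ b₂ ∈ B, b₁ ≠ b₂ →
      ¬ G.Adj a b₁ → ¬ G.Adj a b₂ → G.neighborSet b₁ = G.neighborSet b₂) :
    (∀ b ∈ B, ∃! b', b' ∈ B ∧ b' ≠ b ∧ G.neighborSet b' = G.neighborSet b) ∧
    (∀ a ∈ A, ∀ b ∈ B, ∀ a' ∈ A, ∀ b' ∈ B,
      ¬ G.Adj a b → ¬ G.Adj a' b → ¬ G.Adj a b' → ¬ G.Adj a' b') ∧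
    Even n := by
  classical
  obtain ⟨hdisj, hcover, hadj⟩ := hbip
  -- neighbors of a vertex in B lie in A, and vice versa
  have hnbA : ∀ b ∈ B, ∀ v, G.Adj b v → v ∈ A := by
    intro b hb v hv
    rcases hadj b v hv with ⟨h1, _⟩ | ⟨_, h2⟩
    · exact absurd hb (Finset.disjoint_left.mp hdisj h1)
    · exact h2
  have hnbB : ∀ a ∈ A, ∀ v, G.Adj a v → v ∈ B := by
    intro a ha v hv
    rcases hadj a v hv with ⟨_, h1⟩ | ⟨h2, _⟩
    · exact h1
    · exact absurd h2 (Finset.disjoint_left.mp hdisj ha)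
  -- counting: for x in one side, the filter of neighbors on the other side has card k
  have key : ∀ (S : Finset V) (x : V), S.card = n →
      (∀ v, G.Adj x v → v ∈ S) → (S.filter (fun v => ¬ G.Adj x v)).card = 2 := by
    intro S x hS hsub
    have h1 : S.filter (fun v => G.Adj x v) = (G.neighborSet x).toFinset := by
      ext v
      simp only [Finset.mem_filter, Set.mem_toFinset, SimpleGraph.mem_neighborSet]
      exact ⟨fun h => h.2, fun h => ⟨hsub v h, h⟩⟩
    have h2 : (S.filter (fun v => G.Adj x v)).card = k := by
      rw [h1, ← Set.ncard_eq_toFinset_card']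
      exact hreg x
    have h3 := Finset.card_filter_add_card_filter_not
      (s := S) (p := fun v => G.Adj x v)
    omega
  have keyA : ∀ a ∈ A, (B.filter (fun v => ¬ G.Adj a v)).card = 2 := fun a ha =>
    key B a hB (hnbB a ha)
  have keyB : ∀ b ∈ B, (A.filter (fun v => ¬ G.Adj b v)).card = 2 := fun b hb =>
    key A b hA (hnbA b hb)
  -- part 1
  have part1 : ∀ b ∈ B, ∃! b', b' ∈ B ∧ b' ≠ b ∧ G.neighborSet b' = G.neighborSet b := by
    intro b hb
    -- pick a non-neighbor a ∈ A of b
    have hpos : 0 < (A.filter (fun v => ¬ G.Adj b v)).card := by rw [keyB b hb]; omega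
    obtain ⟨a, haf⟩ := Finset.card_pos.mp hpos
    rw [Finset.mem_filter] at haf
    obtain ⟨ha, hnab⟩ := haf
    have hnba : ¬ G.Adj a b := fun h => hnab h.symm
    -- the non-neighbor set of a in B contains b; it has a second element b'
    have hbS : b ∈ B.filter (fun v => ¬ G.Adj a v) := Finset.mem_filter.mpr ⟨hb, hnba⟩
    have hcard2 := keyA a ha
    have : 1 < (B.filter (fun v => ¬ G.Adj a v)).card := by omega
    obtain ⟨b', hb'S, hb'ne⟩ := Finset.exists_mem_ne this b
    rw [Finset.mem_filter] at hb'S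
    obtain ⟨hb', hnab'⟩ := hb'S
    refine ⟨b', ⟨hb', hb'ne, (hyp a ha b hb b' hb' (Ne.symm hb'ne) hnba hnab').symm⟩, ?_⟩
    -- uniqueness
    intro c ⟨hc, hcne, hcN⟩
    by_contra hne
    -- b, b', c are three distinct non-neighbors of a
    have hnac : ¬ G.Adj a c := by
      intro h
      have : a ∈ G.neighborSet b := hcN ▸ (G.adj_symm h)
      exact hnba this.symm
    have hnab'2 : ¬ G.Adj a b' := hnab'
    have hsub : ({b, b', c} : Finset V) ⊆ B.filter (fun v => ¬ G.Adj a v) := by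
      intro x hx
      simp only [Finset.mem_insert, Finset.mem_singleton] at hx
      rcases hx with rfl | rfl | rfl
      · exact Finset.mem_filter.mpr ⟨hb, hnba⟩
      · exact Finset.mem_filter.mpr ⟨hb', hnab'⟩
      · exact Finset.mem_filter.mpr ⟨hc, hnac⟩
    have h3 : ({b, b', c} : Finset V).card = 3 := by
      rw [Finset.card_insert_of_notMem, Finset.card_insert_of_notMem, Finset.card_singleton]
      · simp only [Finset.mem_singleton]; exact fun h => hne h.symm
      · simp only [Finset.mem_insert, Finset.mem_singleton]
        push_neg
        exact ⟨Ne.symm hb'ne, Ne.symm hcne⟩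
    have := Finset.card_le_card hsub
    omega
  refine ⟨part1, ?_, ?_⟩
  · -- part 2
    intro a ha b hb a' ha' b' hb' hab ha'b hab' ha'b'
    by_cases hbb : b = b'
    · exact ha'b (hbb ▸ ha'b')
    · have hN := hyp a ha b hb b' hb' hbb hab hab'
      have : a' ∈ G.neighborSet b' := G.adj_symm ha'b'
      rw [← hN] at this
      exact ha'b this.symm
  · -- Even n: B is partitioned into fibers of b ↦ N(b), each of size 2
    have hfib : ∀ b ∈ B, (B.filter (fun c => G.neighborSet c = G.neighborSet b)).card = 2 := by
      intro b hb
      obtain ⟨b', ⟨hb', hb'ne, hb'N⟩, huniq⟩ := part1 b hb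
      have : B.filter (fun c => G.neighborSet c = G.neighborSet b) = {b, b'} := by
        ext c
        simp only [Finset.mem_filter, Finset.mem_insert, Finset.mem_singleton]
        constructor
        · rintro ⟨hc, hcN⟩
          by_cases h : c = b
          · exact Or.inl h
          · exact Or.inr (huniq c ⟨hc, h, hcN⟩)
        · rintro (rfl | rfl)
          · exact ⟨hb, rfl⟩
          · exact ⟨hb', hb'N⟩
      rw [this, Finset.card_insert_of_notMem (by simp [Ne.symm hb'ne]), Finset.card_singleton]
    have hcard := Finset.card_eq_sum_card_fiberwise
      (s := B) (t := B.image (fun b => G.neighborSet b)) (f := fun b => G.neighborSet b)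
      (fun b hb => Finset.mem_image_of_mem _ hb)
    have hsum : ∀ s ∈ B.image (fun b => G.neighborSet b),
        (B.filter (fun c => G.neighborSet c = s)).card = 2 := by
      intro s hs
      obtain ⟨b, hb, rfl⟩ := Finset.mem_image.mp hs
      exact hfib b hb
    rw [Finset.sum_congr rfl hsum, Finset.sum_const, smul_eq_mul] at hcard
    rw [← hB]
    exact ⟨(B.image (fun b => G.neighborSet b)).card, by omega⟩
end
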